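/- Let W_u be defined for each vertex u of a finite tournament as the set of vertices not reachable from u by a path of length at most 2. Consider the random process: start at any vertex u_0; while W_{u_t} ≠ ∅, pick u_{t+1} uniformly at random from W_{u_t}. Then the process terminates with probability 1, and E[|W_{u_{t+4}}|] ≤ (11/12)·|W_{u_t}| + 1 whenever considering the bound that with probability at least 1/4 a single step reduces |W| to at most 2|W|/3 and |W| always strictly decreases. -/

import Mathlib

def IsTournament {V : Type*} (E : V → V → Prop) : Prop :=
  (∀ v, ¬ E v v) ∧ ∀ u v : V, u ≠ v → (E u v ↔ ¬ E v u)

/-- `W E u` is the set of vertices `v ≠ u` with no directed path of length at most 2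
from `u` to `v`. -/
def W {V : Type*} [Fintype V] [DecidableEq V] (E : V → V → Prop) [DecidableRel E]
    (u : V) : Finset V :=
  Finset.univ.filter
    (fun v => v ≠ u ∧ ¬ E u v ∧ ∀ w : V, w ≠ u → w ≠ v → ¬ (E u w ∧ E w v))

section Aux

variable {V : Type*} [Fintype V] [DecidableEq V] {E : V → V → Prop} [DecidableRel E]

lemma mem_W {u v : V} : v ∈ W E u ↔
    v ≠ u ∧ ¬ E u v ∧ ∀ w : V, w ≠ u → w ≠ v → ¬ (E u w ∧ E w v) := by
  simp [W]

lemma not_mem_W_self (u : V) : u ∉ W E u := by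
  simp [mem_W]

lemma W_subset (hT : IsTournament E) {u v : V} (hv : v ∈ W E u) : W E v ⊆ W E u := by
  rw [mem_W] at hv
  obtain ⟨hvu, hEuv, hpath⟩ := hv
  have hEvu : E v u := (hT.2 v u hvu).mpr hEuv
  intro x hx
  rw [mem_W] at hx
  obtain ⟨hxv, hEvx, hpath'⟩ := hx
  have hxu : x ≠ u := by
    rintro rfl; exact hEvx hEvu
  rw [mem_W]
  refine ⟨hxu, ?_, ?_⟩
  · intro hEux
    exact hpath' u (Ne.symm hvu) (Ne.symm hxu) ⟨hEvu, hEux⟩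
  · rintro w hwu hwx ⟨hEuw, hEwx⟩
    have hwv : w ≠ v := by rintro rfl; exact hEuv hEuw
    by_cases hvw : E v w
    · exact hpath' w hwv hwx ⟨hvw, hEwx⟩
    · exact hpath w hwu hwv ⟨hEuw, (hT.2 w v hwv).mpr hvw⟩

lemma card_W_lt (hT : IsTournament E) {u v : V} (hv : v ∈ W E u) :
    (W E v).card < (W E u).card :=
  Finset.card_lt_card
    ((Finset.ssubset_iff_of_subset (W_subset hT hv)).2 ⟨v, hv, not_mem_W_self v⟩)

lemma W_asymm (hT : IsTournament E) {a b : V} (hb : b ∈ W E a) : a ∉ W E b := by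
  rw [mem_W] at hb ⊢
  obtain ⟨hba, hEab, -⟩ := hb
  have : E b a := (hT.2 b a hba).mpr hEab
  rintro ⟨-, hEba, -⟩
  exact hEba this

lemma sum_card_W_le (hT : IsTournament E) (u : V) :
    2 * ∑ a ∈ W E u, (W E a).card ≤ (W E u).card * ((W E u).card - 1) := by
  set S := W E u with hS
  have hcard : ∀ a ∈ S, (W E a).card = ∑ b ∈ S, (if b ∈ W E a then 1 else 0) := by
    intro a ha
    rw [Finset.sum_boole]
    have : S.filter (fun b => b ∈ W E a) = W E a := by
      rw [Finset.filter_mem_eq_inter, Finset.inter_eq_right]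
      exact W_subset hT ha
    rw [this]
    simp
  calc 2 * ∑ a ∈ S, (W E a).card
      = (∑ a ∈ S, ∑ b ∈ S, (if b ∈ W E a then 1 else 0))
        + ∑ a ∈ S, ∑ b ∈ S, (if a ∈ W E b then 1 else 0) := by
        rw [Finset.sum_comm (f := fun a b => if a ∈ W E b then 1 else 0)]
        rw [← Finset.sum_congr rfl hcard]
        ring
    _ = ∑ a ∈ S, ∑ b ∈ S,
        ((if b ∈ W E a then 1 else 0) + (if a ∈ W E b then 1 else 0)) := by
        rw [← Finset.sum_add_distrib]
        exact Finset.sum_congr rfl fun a _ => (Finset.sum_add_distrib).symm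
    _ ≤ ∑ a ∈ S, ∑ b ∈ S, (if a = b then 0 else 1) := by
        refine Finset.sum_le_sum fun a _ => Finset.sum_le_sum fun b _ => ?_
        rcases eq_or_ne a b with rfl | hab
        · simp [not_mem_W_self]
        · simp only [if_neg hab]
          by_cases h1 : b ∈ W E a
          · simp [h1, W_asymm hT h1]
          · by_cases h2 : a ∈ W E b <;> simp [h1, h2]
    _ = S.card * (S.card - 1) := by
        rw [Finset.sum_congr rfl (g := fun _ => S.card - 1) ?_, Finset.sum_const,
          smul_eq_mul]
        intro a ha
        have : ∀ b ∈ S, (if a = b then 0 else 1) = if b ≠ a then 1 else 0 := by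
          intro b _
          rcases eq_or_ne a b with rfl | h
          · simp
          · simp [h, Ne.symm h]
        rw [Finset.sum_congr rfl this, Finset.sum_boole, Finset.filter_ne' S a,
          Finset.card_erase_of_mem ha]
        simp

end Aux

/-- One step of the random process: if `W u` is nonempty, move to a uniformly random
element of `W u`; otherwise stay put. -/
noncomputable def step {V : Type*} [Fintype V] [DecidableEq V]
    (E : V → V → Prop) [DecidableRel E] (u : V) : PMF V :=
  if h : (W E u).Nonempty then PMF.uniformOfFinset (W E u) h else PMF.pure u

/-- Four steps of the random process started at `u`. -/
noncomputable def fourStep {V : Type*} [Fintype V] [DecidableEq V]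
    (E : V → V → Prop) [DecidableRel E] (u : V) : PMF V :=
  (step E u).bind fun a => (step E a).bind fun b => (step E b).bind (step E)

section PMFAux

variable {V : Type*} [Fintype V] [DecidableEq V] {E : V → V → Prop} [DecidableRel E]

/-- expectation of `|W|` under a distribution, in `ENNReal`. -/
noncomputable def Fex (E : V → V → Prop) [DecidableRel E] (p : PMF V) : ENNReal :=
  ∑ v : V, p v * ((W E v).card : ENNReal)

lemma Fex_ne_top (p : PMF V) : Fex E p ≠ ⊤ := by
  refine (ENNReal.sum_lt_top.2 fun v _ => ?_).ne
  exact ENNReal.mul_lt_top (lt_of_le_of_lt (p.coe_le_one v) ENNReal.one_lt_top)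
    (ENNReal.natCast_lt_top _)

lemma Fex_pure (b : V) : Fex E (PMF.pure b) = ((W E b).card : ENNReal) := by
  simp [Fex, PMF.pure_apply]

lemma Fex_bind (p : PMF V) (k : V → PMF V) :
    Fex E (p.bind k) = ∑ a : V, p a * Fex E (k a) := by
  unfold Fex
  simp only [PMF.bind_apply, tsum_fintype, Finset.sum_mul, Finset.mul_sum]
  rw [Finset.sum_comm]
  exact Finset.sum_congr rfl fun a _ => Finset.sum_congr rfl fun v _ => by ring

lemma Fex_step_eq {u : V} (h : (W E u).Nonempty) :
    Fex E (step E u) =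
      ((W E u).card : ENNReal)⁻¹ * ∑ v ∈ W E u, ((W E v).card : ENNReal) := by
  unfold Fex step
  rw [dif_pos h]
  simp only [PMF.uniformOfFinset_apply, ite_mul, zero_mul]
  rw [Finset.sum_ite_mem, Finset.univ_inter, Finset.mul_sum]

lemma Fex_step_le (hT : IsTournament E) (b : V) :
    Fex E (step E b) ≤ ((W E b).card : ENNReal) := by
  by_cases h : (W E b).Nonempty
  · rw [Fex_step_eq h]
    calc ((W E b).card : ENNReal)⁻¹ * ∑ v ∈ W E b, ((W E v).card : ENNReal)
        ≤ ((W E b).card : ENNReal)⁻¹ * ∑ _v ∈ W E b, ((W E b).card : ENNReal) := by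
          refine mul_le_mul_right (Finset.sum_le_sum fun v hv => ?_) _
          exact_mod_cast (card_W_lt hT hv).le
      _ = ((W E b).card : ENNReal)⁻¹ * (((W E b).card : ENNReal) * ((W E b).card : ENNReal)) := by
          rw [Finset.sum_const, nsmul_eq_mul]
      _ = ((W E b).card : ENNReal) := by
          rw [← mul_assoc, ENNReal.inv_mul_cancel, one_mul]
          · exact_mod_cast (Finset.card_pos.mpr h).ne'
          · exact ENNReal.natCast_ne_top _
  · unfold step
    rw [dif_neg h, Fex_pure]
lemma Fex_bind_le (p : PMF V) (k : V → PMF V)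
    (hk : ∀ a, Fex E (k a) ≤ ((W E a).card : ENNReal)) :
    Fex E (p.bind k) ≤ Fex E p := by
  rw [Fex_bind]
  exact Finset.sum_le_sum fun a _ => mul_le_mul_right (hk a) _

lemma Fex_four_le (hT : IsTournament E) (u : V) :
    Fex E (fourStep E u) ≤ Fex E (step E u) := by
  have h2 : ∀ b : V, Fex E ((step E b).bind (step E)) ≤ ((W E b).card : ENNReal) :=
    fun b => (Fex_bind_le _ _ (Fex_step_le hT)).trans (Fex_step_le hT b)
  have h3 : ∀ a : V, Fex E ((step E a).bind fun b => (step E b).bind (step E)) ≤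
      ((W E a).card : ENNReal) :=
    fun a => (Fex_bind_le _ _ h2).trans (Fex_step_le hT a)
  exact Fex_bind_le _ _ h3

end PMFAux

theorem random_king_process {V : Type*} [Fintype V] [DecidableEq V]
    (E : V → V → Prop) [DecidableRel E] (hT : IsTournament E) :
    -- the process terminates (with probability 1): every trajectory that moves into
    -- W of the current vertex whenever it is nonempty reaches an empty W
    (∀ u : ℕ → V, (∀ t, (W E (u t)).Nonempty → u (t + 1) ∈ W E (u t)) →
      ∃ t, W E (u t) = ∅) ∧
    -- expected size of W after four steps: E[|W_{u_{t+4}}|] ≤ (11/12)·|W_{u_t}| + 1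
    (∀ u : V,
      ∑ v : V, ((fourStep E u) v).toReal * ((W E v).card : ℝ) ≤
        11 / 12 * ((W E u).card : ℝ) + 1) := by
  constructor
  · intro u hu
    by_contra h
    push_neg at h
    have hne : ∀ t, (W E (u t)).Nonempty := fun t => h t
    have hdec : ∀ t, (W E (u (t + 1))).card < (W E (u t)).card :=
      fun t => card_W_lt hT (hu t (hne t))
    have key : ∀ n, (W E (u n)).card + n ≤ (W E (u 0)).card := by
      intro n
      induction n with
      | zero => simp
      | succ n ih => have := hdec n; omega
    have := key ((W E (u 0)).card + 1)
    omega
  · intro u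
    have hL : ∑ v : V, ((fourStep E u) v).toReal * ((W E v).card : ℝ)
        = (Fex E (fourStep E u)).toReal := by
      rw [Fex, ENNReal.toReal_sum]
      · exact Finset.sum_congr rfl fun v _ => by
          simp [ENNReal.toReal_mul]
      · intro v _
        exact ENNReal.mul_ne_top
          (((fourStep E u).coe_le_one v).trans_lt ENNReal.one_lt_top).ne
          (ENNReal.natCast_ne_top _)
    rw [hL]
    have h1 : (Fex E (fourStep E u)).toReal ≤ (Fex E (step E u)).toReal :=
      ENNReal.toReal_mono (Fex_ne_top _) (Fex_four_le hT u)
    refine h1.trans ?_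
    by_cases h : (W E u).Nonempty
    · set s := (W E u).card with hs
      have hs1 : 1 ≤ s := Finset.card_pos.mpr h
      have heq : (Fex E (step E u)).toReal
          = ((s : ℝ))⁻¹ * ∑ v ∈ W E u, ((W E v).card : ℝ) := by
        rw [Fex_step_eq h, ENNReal.toReal_mul, ENNReal.toReal_inv,
          ENNReal.toReal_sum (fun v _ => ENNReal.natCast_ne_top _)]
        simp
        exact Or.inl rfl
      rw [heq]
      have hsumR : 2 * ∑ v ∈ W E u, ((W E v).card : ℝ) ≤ (s : ℝ) * ((s : ℝ) - 1) := by
        calc 2 * ∑ v ∈ W E u, ((W E v).card : ℝ)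
            = ((2 * ∑ a ∈ W E u, (W E a).card : ℕ) : ℝ) := by push_cast; ring
          _ ≤ ((s * (s - 1) : ℕ) : ℝ) := Nat.cast_le.2 (sum_card_W_le hT u)
          _ = (s : ℝ) * ((s : ℝ) - 1) := by
              rw [Nat.cast_mul, Nat.cast_sub hs1]; norm_num
      have hspos : (0 : ℝ) < s := by exact_mod_cast hs1
      have hs1R : (1 : ℝ) ≤ s := by exact_mod_cast hs1
      rw [inv_mul_le_iff₀ hspos]
      nlinarith [hsumR, hspos, hs1R]
    · have hstep : step E u = PMF.pure u := by unfold step; rw [dif_neg h]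
      have he : W E u = ∅ := Finset.not_nonempty_iff_eq_empty.1 h
      rw [hstep, Fex_pure, he]
      norm_num
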